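/- With the bit-reversal eviction schedule, each node at depth i of the complete binary tree with 2^L leaves lies on the eviction path exactly once in every 2^i consecutive evictions: for any depth i ≤ L and any length-i bit string p, among any 2^i consecutive values G, G+1, ..., G+2^i−1, exactly one value G' satisfies that the length-i prefix of BitReversal(G' mod 2^L) equals p. -/

import Mathlib

/-- Reversal of the `L` low-order bits of `x`. -/
def bitReversal (L x : ℕ) : ℕ :=
  ∑ i ∈ Finset.range L, (x / 2 ^ i % 2) * 2 ^ (L - 1 - i)

lemma bitReversal_zero (x : ℕ) : bitReversal 0 x = 0 := by simp [bitReversal]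

lemma bitReversal_succ (i x : ℕ) :
    bitReversal (i+1) x = (x % 2) * 2^i + bitReversal i (x / 2) := by
  unfold bitReversal
  rw [Finset.sum_range_succ', add_comm]
  congr 1
  · simp
  · apply Finset.sum_congr rfl
    intro j hj
    have h1 : x / 2 ^ (j+1) = x / 2 / 2 ^ j := by
      rw [Nat.div_div_eq_div_mul, ← pow_succ']
    have h2 : i + 1 - 1 - (j+1) = i - 1 - j := by omega
    rw [h1, h2]

lemma bitReversal_lt (i x : ℕ) : bitReversal i x < 2 ^ i := by
  induction i generalizing x with
  | zero => simp [bitReversal_zero]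
  | succ n ih =>
    rw [bitReversal_succ]
    have := ih (x / 2)
    have hx : x % 2 ≤ 1 := by omega
    have : (x % 2) * 2 ^ n ≤ 2 ^ n := by nlinarith
    have h2 : 2 ^ (n+1) = 2 * 2 ^ n := by ring
    omega

lemma bitReversal_mod (i x : ℕ) : bitReversal i (x % 2 ^ i) = bitReversal i x := by
  induction i generalizing x with
  | zero => simp [bitReversal_zero]
  | succ n ih =>
    rw [bitReversal_succ, bitReversal_succ]
    have h1 : x % 2 ^ (n+1) % 2 = x % 2 := by
      apply Nat.mod_mod_of_dvd
      exact dvd_pow_self 2 (Nat.succ_ne_zero n)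
    have h2 : x % 2 ^ (n+1) / 2 = x / 2 % 2 ^ n := by
      rw [pow_succ']
      exact Nat.mod_mul_right_div_self x 2 (2 ^ n)
    rw [h1, h2, ih]

lemma bitReversal_div (L i x : ℕ) (h : i ≤ L) :
    bitReversal L x / 2 ^ (L - i) = bitReversal i x := by
  induction L generalizing i x with
  | zero =>
    interval_cases i
    simp [bitReversal_zero]
  | succ M ih =>
    rcases Nat.eq_zero_or_pos i with hi0 | hi0
    · subst hi0
      rw [bitReversal_zero]
      simp only [Nat.sub_zero]
      exact Nat.div_eq_of_lt (bitReversal_lt _ _)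
    · obtain ⟨k, rfl⟩ : ∃ k, i = k + 1 := ⟨i - 1, by omega⟩
      rw [bitReversal_succ M x, bitReversal_succ k x]
      have hk : k ≤ M := by omega
      have he : M + 1 - (k + 1) = M - k := by omega
      rw [he]
      have h2M : (2:ℕ) ^ M = 2 ^ k * 2 ^ (M - k) := by
        rw [← pow_add]; congr 1; omega
      rw [h2M, ← mul_assoc]
      rw [mul_comm (x % 2 * 2 ^ k) (2 ^ (M - k))]
      rw [Nat.mul_add_div (Nat.pow_pos (by norm_num))]
      rw [ih k (x/2) hk]

lemma bitReversal_inj (i : ℕ) : ∀ x y, x < 2 ^ i → y < 2 ^ i →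
    bitReversal i x = bitReversal i y → x = y := by
  induction i with
  | zero => intro x y hx hy _; omega
  | succ n ih =>
    intro x y hx hy h
    rw [bitReversal_succ, bitReversal_succ] at h
    have h1 := bitReversal_lt n (x / 2)
    have h2 := bitReversal_lt n (y / 2)
    have hx1 : x % 2 = 0 ∨ x % 2 = 1 := by omega
    have hy1 : y % 2 = 0 ∨ y % 2 = 1 := by omega
    have hbits : x % 2 = y % 2 ∧ bitReversal n (x/2) = bitReversal n (y/2) := by
      rcases hx1 with h'|h' <;> rcases hy1 with h''|h'' <;> rw [h', h''] at h <;>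
        simp only [zero_mul, one_mul, zero_add] at h <;> omega
    have hP : (2:ℕ) ^ (n+1) = 2 * 2 ^ n := by ring
    have hx2 : x / 2 < 2 ^ n := by omega
    have hy2 : y / 2 < 2 ^ n := by omega
    have := ih (x/2) (y/2) hx2 hy2 hbits.2
    omega

lemma bitReversal_surj (i p : ℕ) (hp : p < 2 ^ i) :
    ∃ q, q < 2 ^ i ∧ bitReversal i q = p := by
  have hsub : (Finset.range (2^i)).image (bitReversal i) ⊆ Finset.range (2^i) := by
    intro a ha
    simp only [Finset.mem_image, Finset.mem_range] at *
    obtain ⟨b, _, rfl⟩ := ha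
    exact bitReversal_lt i b
  have hcard : ((Finset.range (2^i)).image (bitReversal i)).card = (Finset.range (2^i)).card := by
    apply Finset.card_image_of_injOn
    intro a ha b hb hab
    exact bitReversal_inj i a b (Finset.mem_range.mp ha) (Finset.mem_range.mp hb) hab
  have heq := Finset.eq_of_subset_of_card_le hsub (le_of_eq hcard.symm)
  have hmem : p ∈ (Finset.range (2^i)).image (bitReversal i) := by
    rw [heq]; exact Finset.mem_range.mpr hp
  simp only [Finset.mem_image, Finset.mem_range] at hmem
  obtain ⟨q, hq, hq2⟩ := hmem
  exact ⟨q, hq, hq2⟩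

lemma mod_eq_of_window {n a b : ℕ} (hn : 0 < n) (hab : a ≤ b) (hb : b < a + n)
    (hm : a % n = b % n) : a = b := by
  have hmod : a ≡ b [MOD n] := hm
  obtain ⟨c, hc⟩ := (Nat.modEq_iff_dvd' hab).mp hmod
  rcases Nat.eq_zero_or_pos c with rfl | hc0
  · omega
  · have : n ≤ n * c := Nat.le_mul_of_pos_right n hc0
    omega

lemma window_unique (n G q : ℕ) (hn : 0 < n) (hq : q < n) :
    ∃! G', G' ∈ Finset.Ico G (G + n) ∧ G' % n = q := by
  have hr : G % n < n := Nat.mod_lt _ hn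
  have hle : G % n ≤ G := Nat.mod_le G n
  have hdvd : n ∣ G - G % n := ⟨G / n, by have := Nat.div_add_mod G n; omega⟩
  obtain ⟨c, hc⟩ := hdvd
  refine ⟨if q < G % n then G - G % n + n + q else G - G % n + q, ⟨?_, ?_⟩, ?_⟩
  · simp only [Finset.mem_Ico]
    split <;> omega
  · split
    · have he : G - G % n + n + q = q + n * c + n := by omega
      rw [he, Nat.add_mod_right, Nat.add_mul_mod_self_left, Nat.mod_eq_of_lt hq]
    · have he : G - G % n + q = q + n * c := by omega
      rw [he, Nat.add_mul_mod_self_left, Nat.mod_eq_of_lt hq]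
  · rintro y ⟨hy, hyq⟩
    simp only [Finset.mem_Ico] at hy
    have hcand : (if q < G % n then G - G % n + n + q else G - G % n + q) ∈
        Finset.Ico G (G + n) := by
      simp only [Finset.mem_Ico]; split <;> omega
    have hcandq : (if q < G % n then G - G % n + n + q else G - G % n + q) % n = q := by
      split
      · have he : G - G % n + n + q = q + n * c + n := by omega
        rw [he, Nat.add_mod_right, Nat.add_mul_mod_self_left, Nat.mod_eq_of_lt hq]
      · have he : G - G % n + q = q + n * c := by omega
        rw [he, Nat.add_mul_mod_self_left, Nat.mod_eq_of_lt hq]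
    simp only [Finset.mem_Ico] at hcand
    set z := if q < G % n then G - G % n + n + q else G - G % n + q with hz
    rcases le_total y z with h | h
    · exact mod_eq_of_window hn h (by omega) (by rw [hyq, hcandq])
    · exact (mod_eq_of_window hn h (by omega) (by rw [hyq, hcandq])).symm

/-- Bit-reversal eviction schedule: each depth-`i` node (identified with the
length-`i` prefix `p < 2^i` of a leaf's `L`-bit representation) lies on the
eviction path exactly once among any `2^i` consecutive eviction counters
`G, G+1, …, G+2^i−1`: exactly one `G'` in that window satisfies that the
length-`i` prefix of `BitReversal(G' mod 2^L)` equals `p`. -/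
theorem bitReversal_eviction_schedule (L i p G : ℕ) (hi : i ≤ L)
    (hp : p < 2 ^ i) :
    ∃! G' : ℕ, G' ∈ Finset.Ico G (G + 2 ^ i) ∧
      bitReversal L (G' % 2 ^ L) / 2 ^ (L - i) = p := by
  obtain ⟨q, hq, hqp⟩ := bitReversal_surj i p hp
  have hkey : ∀ G' : ℕ, (bitReversal L (G' % 2 ^ L) / 2 ^ (L - i) = p ↔ G' % 2 ^ i = q) := by
    intro G'
    rw [bitReversal_div L i _ hi]
    have hmm : G' % 2 ^ L % 2 ^ i = G' % 2 ^ i :=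
      Nat.mod_mod_of_dvd G' (pow_dvd_pow 2 hi)
    have h1 : bitReversal i (G' % 2 ^ L) = bitReversal i (G' % 2 ^ i) := by
      rw [← bitReversal_mod i (G' % 2 ^ L), hmm]
    rw [h1]
    constructor
    · intro h
      exact bitReversal_inj i _ q (Nat.mod_lt _ (Nat.pow_pos (by norm_num))) hq
        (by rw [h, hqp])
    · intro h; rw [h, hqp]
  obtain ⟨G', ⟨hmem, hmod⟩, huniq⟩ :=
    window_unique (2 ^ i) G q (Nat.pow_pos (by norm_num)) hq
  exact ⟨G', ⟨hmem, (hkey G').mpr hmod⟩, fun y ⟨hy1, hy2⟩ => huniq y ⟨hy1, (hkey y).mp hy2⟩⟩
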